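/- Let A be a serial finite length abelian category, let X be an indecomposable object of A, let Y₁, …, Y_m be indecomposable objects of A, and let f : Y₁ ⊞ ⋯ ⊞ Y_m → X be a morphism with components f_i : Y_i → X. Then f is an epimorphism if and only if at least one of the components f_i is an epimorphism. -/

import Mathlib

open CategoryTheory CategoryTheory.Limits

universe v u

attribute [local instance] CategoryTheory.Abelian.hasFiniteBiproducts

variable {A : Type u} [Category.{v} A] [Abelian A]

/-- An object is uniserial if its subobjects are totally ordered by inclusion. -/
def Uniserial (U : A) : Prop :=
  ∀ P Q : Subobject U, P ≤ Q ∨ Q ≤ P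

/-- A category is serial if every object is isomorphic to a finite biproduct of
uniserial objects. -/
def IsSerial (A : Type u) [Category.{v} A] [Abelian A] : Prop :=
  ∀ X : A, ∃ (m : ℕ) (Y : Fin m → A),
    (∀ i, Uniserial (Y i)) ∧ Nonempty (X ≅ ⨁ Y)

/-- An object is indecomposable if it is nonzero and in any decomposition as a
biproduct one of the summands is zero. -/
def Indec (X : A) : Prop :=
  ¬ IsZero X ∧ ∀ B C : A, Nonempty (X ≅ B ⊞ C) → IsZero B ∨ IsZero C

set_option linter.unusedSectionVars false

noncomputable def biproductFinSuccIso {n : ℕ} (Z : Fin (n+1) → A) :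
    ⨁ Z ≅ Z 0 ⊞ ⨁ (fun i : Fin n => Z i.succ) where
  hom := biprod.lift (biproduct.π Z 0) (biproduct.lift fun i => biproduct.π Z i.succ)
  inv := biprod.desc (biproduct.ι Z 0) (biproduct.desc fun i => biproduct.ι Z i.succ)
  hom_inv_id := by
    rw [biprod.lift_desc, biproduct.lift_desc, ← biproduct.total, Fin.sum_univ_succ]
  inv_hom_id := by
    ext
    · simp
    · simp [biproduct.ι_π, eq_comm, Fin.succ_ne_zero]
    · simp [biproduct.ι_π, Fin.succ_ne_zero]
    · simp [biproduct.ι_π, Fin.succ_inj]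

lemma uniserial_of_iso {X Y : A} (e : X ≅ Y) (h : Uniserial Y) : Uniserial X := by
  intro P Q
  rcases h (Subobject.mapIsoToOrderIso e P) (Subobject.mapIsoToOrderIso e Q) with h' | h'
  · exact Or.inl ((Subobject.mapIsoToOrderIso e).le_iff_le.mp h')
  · exact Or.inr ((Subobject.mapIsoToOrderIso e).le_iff_le.mp h')

lemma isZero_biproduct_empty (Z : Fin 0 → A) : IsZero (⨁ Z) := by
  rw [IsZero.iff_id_eq_zero]
  apply biproduct.hom_ext
  exact fun j => j.elim0

lemma uniserial_of_indec_aux (n : ℕ) :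
    ∀ (Z : Fin n → A) (_ : ∀ i, Uniserial (Z i)) (X : A) (_ : Indec X) (_ : X ≅ ⨁ Z),
      Uniserial X := by
  induction n with
  | zero =>
    intro Z _ X hX e
    exact absurd (IsZero.of_iso (isZero_biproduct_empty Z) e) hX.1
  | succ n ih =>
    intro Z hZ X hX e
    have e' : X ≅ Z 0 ⊞ ⨁ (fun i : Fin n => Z i.succ) := e ≪≫ biproductFinSuccIso Z
    rcases hX.2 _ _ ⟨e'⟩ with h0 | h0
    · exact ih (fun i => Z i.succ) (fun i => hZ i.succ) X hX
        (e' ≪≫ (isoZeroBiprod h0).symm)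
    · exact uniserial_of_iso (e' ≪≫ (isoBiprodZero h0).symm) (hZ 0)

lemma uniserial_of_indec (hser : IsSerial A) {X : A} (hX : Indec X) : Uniserial X := by
  obtain ⟨n, Z, hZ, ⟨e⟩⟩ := hser X
  exact uniserial_of_indec_aux n Z hZ X hX e

lemma epi_iff_imageSubobject_eq_top {P Q : A} (f : P ⟶ Q) :
    Epi f ↔ imageSubobject f = ⊤ := by
  constructor
  · intro hf
    have h : factorThruImageSubobject f ≫ (imageSubobject f).arrow = f :=
      imageSubobject_arrow_comp f
    have : Epi (imageSubobject f).arrow := epi_of_epi_fac h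
    have : IsIso (imageSubobject f).arrow := isIso_of_mono_of_epi _
    exact (Subobject.isIso_arrow_iff_eq_top _).mp this
  · intro hf
    have : IsIso (imageSubobject f).arrow := (Subobject.isIso_arrow_iff_eq_top _).mpr hf
    rw [← imageSubobject_arrow_comp f]
    exact epi_comp _ _

lemma exists_max {α : Type*} [PartialOrder α]
    (ht : ∀ a b : α, a ≤ b ∨ b ≤ a) :
    ∀ (n : ℕ) (g : Fin (n+1) → α), ∃ j, ∀ i, g i ≤ g j := by
  intro n
  induction n with
  | zero => exact fun g => ⟨0, fun i => le_of_eq (by rw [Fin.eq_zero i])⟩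
  | succ n ih =>
    intro g
    obtain ⟨j, hj⟩ := ih (fun i => g i.succ)
    rcases ht (g 0) (g j.succ) with h | h
    · refine ⟨j.succ, fun i => ?_⟩
      rcases Fin.eq_zero_or_eq_succ i with rfl | ⟨k, rfl⟩
      · exact h
      · exact hj k
    · refine ⟨0, fun i => ?_⟩
      rcases Fin.eq_zero_or_eq_succ i with rfl | ⟨k, rfl⟩
      · exact le_refl _
      · exact le_trans (hj k) h

theorem epi_iff_exists_component_epi
    -- `A` is a serial finite length abelian category
    [∀ X : A, IsArtinianObject X] [∀ X : A, IsNoetherianObject X]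
    (hser : IsSerial A)
    (X : A) (hX : Indec X) (m : ℕ) (Y : Fin m → A) (hY : ∀ i, Indec (Y i))
    (f : ⨁ Y ⟶ X) :
    Epi f ↔ ∃ i, Epi (biproduct.ι Y i ≫ f) := by
  constructor
  · intro hf
    cases m with
    | zero =>
      exfalso
      apply hX.1
      rw [IsZero.iff_id_eq_zero]
      have h0 : f = 0 := (isZero_biproduct_empty Y).eq_of_src f 0
      rw [← cancel_epi f, h0, zero_comp, comp_zero]
    | succ n =>
      have huni : Uniserial X := uniserial_of_indec hser hX
      obtain ⟨j, hj⟩ := exists_max huni n (fun i => imageSubobject (biproduct.ι Y i ≫ f))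
      refine ⟨j, ?_⟩
      rw [epi_iff_imageSubobject_eq_top]
      rw [epi_iff_imageSubobject_eq_top] at hf
      refine top_le_iff.mp ?_
      rw [← hf]
      set P := imageSubobject (biproduct.ι Y j ≫ f) with hP
      have hfac : P.Factors f := by
        have := biproduct.total (f := Y)
        have hsum : f = ∑ i : Fin (n+1), biproduct.π Y i ≫ (biproduct.ι Y i ≫ f) := by
          simp_rw [← Category.assoc, ← Preadditive.sum_comp, this, Category.id_comp]
        rw [hsum]
        apply Finset.sum_induction _ _ (fun a b ha hb => Subobject.factors_add _ _ ha hb)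
          Subobject.factors_zero
        intro i _
        apply Subobject.factors_of_le _ (hj i)
        exact Subobject.factors_of_factors_right _ ((Subobject.factors_iff _ _).mpr
          ⟨factorThruImageSubobject _, imageSubobject_arrow_comp _⟩)
      exact imageSubobject_le f (P.factorThru f hfac)
        (Subobject.factorThru_arrow _ _ _)
  · rintro ⟨i, hi⟩
    rw [epi_iff_imageSubobject_eq_top] at hi ⊢
    exact top_le_iff.mp (hi ▸ imageSubobject_comp_le (biproduct.ι Y i) f)
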